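/- arXiv:1204.6645 — 2 statements merged into one kernel-verified Lean document; each statement's English description precedes it below -/
import Mathlib

section
/- Let G be a bipartite graph between finite nonempty sets X and Y, let 0 ≤ q ≤ 1 and ε > 0. Suppose G(K_{1,1}) ≥ (1−ε)q and G(K_{2,2}) ≤ (1+ε)⁴ q⁴. Then (X,Y)_G satisfies DISC(q, q, 4 ε^{1/36}), i.e., |E_{x,y}[(G(x,y) − q) u(x) v(y)]| ≤ 4 ε^{1/36} q for all u : X → [0,1], v : Y → [0,1]. -/
open Finset

private lemma aux_amgm3 {p q r : ℝ} (hp : 0 ≤ p) (hq : 0 ≤ q) (hr : 0 ≤ r) :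
    p * q * r ≤ ((p + q + r) / 3) ^ 3 := by
  nlinarith [mul_nonneg hp (sq_nonneg (q - r)), mul_nonneg hq (sq_nonneg (r - p)),
    mul_nonneg hr (sq_nonneg (p - q)),
    mul_nonneg (add_nonneg (add_nonneg hp hq) hr) (sq_nonneg (p - q)),
    mul_nonneg (add_nonneg (add_nonneg hp hq) hr) (sq_nonneg (q - r)),
    mul_nonneg (add_nonneg (add_nonneg hp hq) hr) (sq_nonneg (r - p))]

private lemma aux_cs_ones {ι : Type*} (s : Finset ι) (f : ι → ℝ) :
    (∑ i ∈ s, f i) ^ 2 ≤ (s.card : ℝ) * ∑ i ∈ s, f i ^ 2 := by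
  have h := Finset.sum_mul_sq_le_sq_mul_sq s (fun _ => (1 : ℝ)) f
  simpa using h

private lemma aux_holder3 {ι : Type*} (s : Finset ι) (t f g h : ι → ℝ)
    (ht : ∀ i ∈ s, 0 ≤ t i) (hf : ∀ i ∈ s, 0 ≤ f i) (hg : ∀ i ∈ s, 0 ≤ g i)
    (hh : ∀ i ∈ s, 0 ≤ h i) (hcube : ∀ i ∈ s, t i ^ 3 = f i * g i * h i) :
    (∑ i ∈ s, t i) ^ 3 ≤ (∑ i ∈ s, f i) * (∑ i ∈ s, g i) * (∑ i ∈ s, h i) := by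
  have hzero : ∀ (w : ι → ℝ), (∀ i ∈ s, 0 ≤ w i) → (∑ i ∈ s, w i = 0) →
      (∀ i ∈ s, t i ^ 3 = 0) → (∑ i ∈ s, t i) ^ 3 ≤ (∑ i ∈ s, f i) * (∑ i ∈ s, g i) * (∑ i ∈ s, h i) → True := fun _ _ _ _ _ => trivial
  by_cases hF : ∑ i ∈ s, f i = 0
  · have hti : ∀ i ∈ s, t i = 0 := by
      intro i hi
      have hfi : f i = 0 := (Finset.sum_eq_zero_iff_of_nonneg hf).mp hF i hi
      have h3 : t i ^ 3 = 0 := by rw [hcube i hi, hfi]; ring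
      exact pow_eq_zero_iff (by norm_num) |>.mp h3
    rw [Finset.sum_eq_zero hti, hF]
    norm_num
  by_cases hGz : ∑ i ∈ s, g i = 0
  · have hti : ∀ i ∈ s, t i = 0 := by
      intro i hi
      have hgi : g i = 0 := (Finset.sum_eq_zero_iff_of_nonneg hg).mp hGz i hi
      have h3 : t i ^ 3 = 0 := by rw [hcube i hi, hgi]; ring
      exact pow_eq_zero_iff (by norm_num) |>.mp h3
    rw [Finset.sum_eq_zero hti, hGz]
    norm_num
  by_cases hH : ∑ i ∈ s, h i = 0
  · have hti : ∀ i ∈ s, t i = 0 := by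
      intro i hi
      have hhi : h i = 0 := (Finset.sum_eq_zero_iff_of_nonneg hh).mp hH i hi
      have h3 : t i ^ 3 = 0 := by rw [hcube i hi, hhi]; ring
      exact pow_eq_zero_iff (by norm_num) |>.mp h3
    rw [Finset.sum_eq_zero hti, hH]
    norm_num
  have hF' : 0 < ∑ i ∈ s, f i := (Finset.sum_nonneg hf).lt_of_ne (Ne.symm hF)
  have hG' : 0 < ∑ i ∈ s, g i := (Finset.sum_nonneg hg).lt_of_ne (Ne.symm hGz)
  have hH' : 0 < ∑ i ∈ s, h i := (Finset.sum_nonneg hh).lt_of_ne (Ne.symm hH)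
  set F := ∑ i ∈ s, f i with hFdef
  set Gs := ∑ i ∈ s, g i with hGdef
  set Hs := ∑ i ∈ s, h i with hHdef
  have hCpos : 0 < F * Gs * Hs := by positivity
  set C := (F * Gs * Hs) ^ ((1:ℝ)/3) with hCdef
  have hCp : 0 < C := Real.rpow_pos_of_pos hCpos _
  have hC3 : C ^ (3:ℕ) = F * Gs * Hs := by
    rw [hCdef, ← Real.rpow_natCast ((F * Gs * Hs) ^ ((1:ℝ)/3)) 3, ← Real.rpow_mul hCpos.le]
    norm_num
  have key : ∀ i ∈ s, t i ≤ C / 3 * (f i / F + g i / Gs + h i / Hs) := by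
    intro i hi
    have h1 : (t i / C) ^ 3 = (f i / F) * (g i / Gs) * (h i / Hs) := by
      rw [div_pow, hcube i hi, hC3]
      field_simp
    have h2 : (t i / C) ^ 3 ≤ ((f i / F + g i / Gs + h i / Hs) / 3) ^ 3 := by
      rw [h1]
      exact aux_amgm3 (div_nonneg (hf i hi) hF'.le) (div_nonneg (hg i hi) hG'.le)
        (div_nonneg (hh i hi) hH'.le)
    have h3 : t i / C ≤ (f i / F + g i / Gs + h i / Hs) / 3 :=
      le_of_pow_le_pow_left₀ (by norm_num)
        (div_nonneg (add_nonneg (add_nonneg (div_nonneg (hf i hi) hF'.le)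
          (div_nonneg (hg i hi) hG'.le)) (div_nonneg (hh i hi) hH'.le)) (by norm_num)) h2
    have h4 := mul_le_mul_of_nonneg_right h3 hCp.le
    rw [div_mul_cancel₀ _ hCp.ne'] at h4
    calc t i ≤ (f i / F + g i / Gs + h i / Hs) / 3 * C := h4
      _ = C / 3 * (f i / F + g i / Gs + h i / Hs) := by ring
  have hsum : ∑ i ∈ s, t i ≤ C := by
    calc ∑ i ∈ s, t i ≤ ∑ i ∈ s, C / 3 * (f i / F + g i / Gs + h i / Hs) :=
          Finset.sum_le_sum key
      _ = C / 3 * ∑ i ∈ s, (f i / F + g i / Gs + h i / Hs) := by rw [Finset.mul_sum]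
      _ = C / 3 * (F / F + Gs / Gs + Hs / Hs) := by
          rw [Finset.sum_add_distrib, Finset.sum_add_distrib, ← Finset.sum_div, ← Finset.sum_div,
            ← Finset.sum_div]
      _ = C := by
          rw [div_self hF'.ne', div_self hG'.ne', div_self hH'.ne']
          ring
  calc (∑ i ∈ s, t i) ^ 3 ≤ C ^ 3 := pow_le_pow_left₀ (Finset.sum_nonneg ht) hsum 3
    _ = F * Gs * Hs := hC3

private lemma aux_sum_center {ι : Type*} (s : Finset ι) (a b : ι → ℝ) (D : ℝ) :
    ∑ i ∈ s, (a i - D) * (b i - D)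
      = (∑ i ∈ s, a i * b i) - D * (∑ i ∈ s, a i) - D * (∑ i ∈ s, b i)
        + (s.card : ℝ) * D ^ 2 := by
  induction s using Finset.cons_induction with
  | empty => simp
  | cons a' s' ha ih =>
    simp only [Finset.sum_cons, Finset.card_cons, ih]
    push_cast
    ring

private lemma aux_expand_sq_sum {ι : Type*} (s : Finset ι) (K c1 c2 : ι → ℝ) (D e : ℝ) :
    ∑ i ∈ s, (K i - D * c1 i - D * c2 i + e) ^ 2
      = (∑ i ∈ s, K i ^ 2) - 2*D*(∑ i ∈ s, K i * c1 i) - 2*D*(∑ i ∈ s, K i * c2 i)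
        + 2*e*(∑ i ∈ s, K i) + D^2*(∑ i ∈ s, c1 i ^ 2) + D^2*(∑ i ∈ s, c2 i ^ 2)
        + 2*D^2*(∑ i ∈ s, c1 i * c2 i) - 2*D*e*(∑ i ∈ s, c1 i) - 2*D*e*(∑ i ∈ s, c2 i)
        + (s.card : ℝ) * e ^ 2 := by
  induction s using Finset.cons_induction with
  | empty => simp
  | cons a' s' ha ih =>
    simp only [Finset.sum_cons, Finset.card_cons, ih]
    push_cast
    ring

private lemma aux_sum_swap3 {α β : Type*} [Fintype α] [Fintype β] (f : α → β → β → ℝ) :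
    ∑ y : β, ∑ y' : β, ∑ x : α, f x y y' = ∑ x : α, ∑ y : β, ∑ y' : β, f x y y' := by
  calc ∑ y : β, ∑ y' : β, ∑ x : α, f x y y'
      = ∑ y : β, ∑ x : α, ∑ y' : β, f x y y' :=
        Finset.sum_congr rfl fun y _ => Finset.sum_comm
    _ = ∑ x : α, ∑ y : β, ∑ y' : β, f x y y' := Finset.sum_comm

private lemma aux_sum_swap4 {α β : Type*} [Fintype α] [Fintype β] (f : α → α → β → β → ℝ) :
    ∑ y : β, ∑ y' : β, ∑ x : α, ∑ x' : α, f x x' y y'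
      = ∑ x : α, ∑ x' : α, ∑ y : β, ∑ y' : β, f x x' y y' := by
  calc ∑ y : β, ∑ y' : β, ∑ x : α, ∑ x' : α, f x x' y y'
      = ∑ x : α, ∑ y : β, ∑ y' : β, ∑ x' : α, f x x' y y' :=
        aux_sum_swap3 (fun x y y' => ∑ x' : α, f x x' y y')
    _ = ∑ x : α, ∑ x' : α, ∑ y : β, ∑ y' : β, f x x' y y' :=
        Finset.sum_congr rfl fun x _ => aux_sum_swap3 (fun x' y y' => f x x' y y')


private lemma aux_div1 {S C m n : ℝ} (hm : 0 < m) (hn : 0 < n) (h : S^2 ≤ m*C) :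
    (S/(m*n))^2 ≤ C/(m*n^2) := by
  rw [div_pow, div_le_div_iff₀ (by positivity) (by positivity)]
  nlinarith [mul_nonneg (mul_nonneg (sub_nonneg.mpr h) hm.le) (mul_nonneg hn.le hn.le)]

private lemma aux_div2 {C Q m n : ℝ} (hm : 0 < m) (hn : 0 < n) (h : C^2 ≤ n^2*Q) :
    (C/(m*n^2))^2 ≤ Q/(m*n)^2 := by
  rw [div_pow, div_le_div_iff₀ (by positivity) (by positivity)]
  nlinarith [mul_nonneg (mul_nonneg (sub_nonneg.mpr h) (sq_nonneg m)) (sq_nonneg n)]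

private lemma aux_div2' {C Q m n : ℝ} (hm : 0 < m) (hn : 0 < n) (h : C^2 ≤ m^2*Q) :
    (C/(m^2*n))^2 ≤ Q/(m*n)^2 := by
  rw [div_pow, div_le_div_iff₀ (by positivity) (by positivity)]
  nlinarith [mul_nonneg (mul_nonneg (sub_nonneg.mpr h) (sq_nonneg m)) (sq_nonneg n)]

private lemma aux_div3 {S P m n : ℝ} (hm : 0 < m) (hn : 0 < n) (h : S^3 ≤ P*(m*n)) :
    (S/(m*n))^3 ≤ P/(m^2*n^2) := by
  rw [div_pow, div_le_div_iff₀ (by positivity) (by positivity)]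
  nlinarith [mul_nonneg (mul_nonneg (sub_nonneg.mpr h) (sq_nonneg m)) (sq_nonneg n)]

private lemma aux_sqle {a B : ℝ} (ha : 0 ≤ a) (hB : 0 ≤ B) (h : a^2 ≤ B^2) : a ≤ B := by
  nlinarith

private lemma aux_absd {d q ε : ℝ} (h1 : (1-ε)*q ≤ d) (h2 : d ≤ (1+ε)*q) : |d - q| ≤ ε*q :=
  abs_le.mpr ⟨by linarith, by linarith⟩

private lemma aux_div_abs {a U mn b : ℝ} (hmn : 0 < mn) (h1 : |a| ≤ b) (h2 : |U| ≤ mn)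
    (hb : 0 ≤ b) : |a * U / mn| ≤ b := by
  rw [abs_div, abs_of_pos hmn, div_le_iff₀ hmn, abs_mul]
  exact mul_le_mul h1 h2 (abs_nonneg _) hb

private lemma aux_final {T R E4 E36 ε q : ℝ} (hq : 0 < q) (hT : |T| ≤ 3*E4*q)
    (hR : |R| ≤ ε*q) (h1 : E4 ≤ E36) (h2 : ε ≤ E36) : |T + R| ≤ 4*E36*q := by
  have habs := abs_add_le T R
  have g1 := mul_le_mul_of_nonneg_right h1 hq.le
  have g2 := mul_le_mul_of_nonneg_right h2 hq.le
  linarith [habs, hT, hR, g1, g2]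

private lemma aux_numeric {t4 c4 d p3 chx chy ε q : ℝ}
    (hq : 0 < q) (hε : 0 < ε) (hε1 : ε ≤ 1)
    (hc4 : c4 ≤ (1+ε)^4 * q^4)
    (hdl : (1-ε)*q ≤ d) (hdu : d ≤ (1+ε)*q) (hd0 : 0 ≤ d)
    (hchx : chx ≤ (1+ε)^2*q^2) (hchy : chy ≤ (1+ε)^2*q^2)
    (hd2x : d^2 ≤ chx)
    (hp3 : d^3 ≤ p3)
    (hstep : t4 ≤ c4 - 4*d*p3 + 2*d^2*chx + 2*d^2*chy - d^4) :
    t4 ≤ 81 * ε * q^4 := by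
  have hB : (0:ℝ) < (1+ε)^2*q^2 := by positivity
  have hDB : d^2 ≤ (1+ε)^2*q^2 := le_trans hd2x hchx
  have h4D : 4*d^4 ≤ 4*d*p3 := by
    have h := mul_nonneg hd0 (sub_nonneg.mpr hp3)
    nlinarith [h]
  have hx1 : 2*d^2*chx ≤ 2*((1+ε)^2*q^2)^2 := by
    linarith [mul_nonneg (sq_nonneg d) (sub_nonneg.mpr hchx),
      mul_nonneg hB.le (sub_nonneg.mpr hDB)]
  have hx2 : 2*d^2*chy ≤ 2*((1+ε)^2*q^2)^2 := by
    linarith [mul_nonneg (sq_nonneg d) (sub_nonneg.mpr hchy),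
      mul_nonneg hB.le (sub_nonneg.mpr hDB)]
  have hD4low : ((1-ε)*q)^4 ≤ d^4 := by
    have h0 : 0 ≤ (1-ε)*q := mul_nonneg (by linarith) hq.le
    exact pow_le_pow_left₀ h0 hdl 4
  have hε2 : ε^2 ≤ 1 := by nlinarith
  have hkey : (0:ℝ) ≤ q^4 * (ε * (41 - 40*ε^2)) :=
    mul_nonneg (by positivity) (mul_nonneg hε.le (by linarith))
  nlinarith [hstep, h4D, hx1, hx2, hD4low, hc4, hkey]

set_option maxHeartbeats 2000000 in
theorem stmt_16 {X Y : Type*} [Fintype X] [Fintype Y] [Nonempty X] [Nonempty Y]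
    (G : X → Y → ℝ) (hG : ∀ x y, 0 ≤ G x y ∧ G x y ≤ 1)
    (q ε : ℝ) (hq : 0 < q) (hq1 : q ≤ 1) (hε : 0 < ε) (hε1 : ε ≤ 1)
    (h11 : (1 - ε) * q ≤ (∑ x : X, ∑ y : Y, G x y) /
        ((Fintype.card X : ℝ) * (Fintype.card Y : ℝ)))
    (h22 : (∑ x : X, ∑ x' : X, ∑ y : Y, ∑ y' : Y, G x y * G x y' * G x' y * G x' y') /
        (((Fintype.card X : ℝ) * (Fintype.card Y : ℝ)) ^ 2) ≤ (1 + ε) ^ 4 * q ^ 4) :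
    ∀ u : X → ℝ, ∀ v : Y → ℝ,
      (∀ x, 0 ≤ u x ∧ u x ≤ 1) → (∀ y, 0 ≤ v y ∧ v y ≤ 1) →
      |(∑ x : X, ∑ y : Y, (G x y - q) * u x * v y) /
          ((Fintype.card X : ℝ) * (Fintype.card Y : ℝ))| ≤ 4 * ε ^ ((1 : ℝ) / 36) * q := by
  intro u v hu hv
  classical
  have hG0 : ∀ x y, 0 ≤ G x y := fun x y => (hG x y).1
  have hG1 : ∀ x y, G x y ≤ 1 := fun x y => (hG x y).2
  set m : ℝ := (Fintype.card X : ℝ) with hm_def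
  set n : ℝ := (Fintype.card Y : ℝ) with hn_def
  have hm : 0 < m := by rw [hm_def]; exact_mod_cast Fintype.card_pos
  have hn : 0 < n := by rw [hn_def]; exact_mod_cast Fintype.card_pos
  set Q : ℝ := ∑ x : X, ∑ x' : X, ∑ y : Y, ∑ y' : Y, G x y * G x y' * G x' y * G x' y'
    with hQ_def
  set r : X → ℝ := fun x => ∑ y, G x y with hr_def
  set c : Y → ℝ := fun y => ∑ x, G x y with hc_def
  set S1 : ℝ := ∑ x, r x with hS1_def
  have hS1h : S1 = ∑ x : X, ∑ y : Y, G x y := by rw [hS1_def]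
  set D : ℝ := S1 / (m * n) with hD_def
  set c4 : ℝ := Q / (m * n) ^ 2 with hc4_def
  set CX : ℝ := ∑ x, r x ^ 2 with hCX_def
  set CY : ℝ := ∑ y, c y ^ 2 with hCY_def
  set P : ℝ := ∑ x, ∑ y, G x y * r x * c y with hP_def
  have hrnn : ∀ x, 0 ≤ r x := fun x => by
    rw [hr_def]; exact Finset.sum_nonneg fun y _ => hG0 x y
  have hcnn : ∀ y, 0 ≤ c y := fun y => by
    rw [hc_def]; exact Finset.sum_nonneg fun x _ => hG0 x y
  have hS1nn : 0 ≤ S1 := by rw [hS1_def]; exact Finset.sum_nonneg fun x _ => hrnn x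
  have hDnn : 0 ≤ D := by rw [hD_def]; positivity
  have hCXnn : 0 ≤ CX := by rw [hCX_def]; exact Finset.sum_nonneg fun x _ => sq_nonneg _
  have hCYnn : 0 ≤ CY := by rw [hCY_def]; exact Finset.sum_nonneg fun y _ => sq_nonneg _
  have hPnn : 0 ≤ P := by
    rw [hP_def]
    exact Finset.sum_nonneg fun x _ => Finset.sum_nonneg fun y _ =>
      mul_nonneg (mul_nonneg (hG0 x y) (hrnn x)) (hcnn y)
  have hcS : ∑ y, c y = S1 := by
    rw [hS1h]
    simp only [hc_def]
    exact Finset.sum_comm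
  -- ============ component identities over product types ============
  have IQy : ∑ p : Y × Y, (∑ x, G x p.1 * G x p.2) ^ 2 = Q := by
    rw [hQ_def]
    rw [Fintype.sum_prod_type]
    calc ∑ y : Y, ∑ y' : Y, (∑ x, G x (y, y').1 * G x (y, y').2) ^ 2
        = ∑ y : Y, ∑ y' : Y, ∑ x : X, ∑ x' : X,
            (G x y * G x y') * (G x' y * G x' y') := by
          refine Finset.sum_congr rfl fun y _ => Finset.sum_congr rfl fun y' _ => ?_
          rw [sq, Finset.sum_mul_sum]
      _ = ∑ x : X, ∑ x' : X, ∑ y : Y, ∑ y' : Y, G x y * G x y' * G x' y * G x' y' := by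
          rw [aux_sum_swap4 (fun x x' y y' => (G x y * G x y') * (G x' y * G x' y'))]
          exact Finset.sum_congr rfl fun _ _ => Finset.sum_congr rfl fun _ _ =>
            Finset.sum_congr rfl fun _ _ => Finset.sum_congr rfl fun _ _ => by ring
  have IQx : ∑ p : X × X, (∑ y, G p.1 y * G p.2 y) ^ 2 = Q := by
    rw [hQ_def]
    rw [Fintype.sum_prod_type]
    refine Finset.sum_congr rfl fun x _ => Finset.sum_congr rfl fun x' _ => ?_
    rw [sq, Finset.sum_mul_sum]
    exact Finset.sum_congr rfl fun y _ => Finset.sum_congr rfl fun y' _ => by ring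
  have ICX : ∑ p : Y × Y, (∑ x, G x p.1 * G x p.2) = CX := by
    rw [hCX_def, Fintype.sum_prod_type]
    rw [aux_sum_swap3 (fun x y y' => G x y * G x y')]
    refine Finset.sum_congr rfl fun x _ => ?_
    rw [sq, hr_def]
    exact (Finset.sum_mul_sum _ _ _ _).symm
  have ICY : ∑ p : X × X, (∑ y, G p.1 y * G p.2 y) = CY := by
    rw [hCY_def, Fintype.sum_prod_type]
    rw [aux_sum_swap3 (fun y x x' => G x y * G x' y)]
    refine Finset.sum_congr rfl fun y _ => ?_
    rw [sq, hc_def]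
    exact (Finset.sum_mul_sum _ _ _ _).symm
  have IP1 : ∑ p : Y × Y, (∑ x, G x p.1 * G x p.2) * c p.1 = P := by
    rw [hP_def, Fintype.sum_prod_type]
    calc ∑ y : Y, ∑ y' : Y, (∑ x, G x (y, y').1 * G x (y, y').2) * c (y, y').1
        = ∑ y : Y, ∑ y' : Y, ∑ x : X, G x y * G x y' * c y := by
          refine Finset.sum_congr rfl fun y _ => Finset.sum_congr rfl fun y' _ => ?_
          rw [Finset.sum_mul]
      _ = ∑ x : X, ∑ y : Y, ∑ y' : Y, G x y * G x y' * c y :=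
          aux_sum_swap3 (fun x y y' => G x y * G x y' * c y)
      _ = ∑ x : X, ∑ y : Y, G x y * r x * c y := by
          refine Finset.sum_congr rfl fun x _ => Finset.sum_congr rfl fun y _ => ?_
          rw [hr_def]
          rw [show (∑ y' : Y, G x y * G x y' * c y) = (∑ y' : Y, G x y') * (G x y * c y) by
            rw [Finset.sum_mul]; exact Finset.sum_congr rfl fun y' _ => by ring]
          ring
  have IP2 : ∑ p : Y × Y, (∑ x, G x p.1 * G x p.2) * c p.2 = P := by
    rw [hP_def, Fintype.sum_prod_type]
    calc ∑ y : Y, ∑ y' : Y, (∑ x, G x (y, y').1 * G x (y, y').2) * c (y, y').2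
        = ∑ y : Y, ∑ y' : Y, ∑ x : X, G x y * G x y' * c y' := by
          refine Finset.sum_congr rfl fun y _ => Finset.sum_congr rfl fun y' _ => ?_
          rw [Finset.sum_mul]
      _ = ∑ x : X, ∑ y : Y, ∑ y' : Y, G x y * G x y' * c y' :=
          aux_sum_swap3 (fun x y y' => G x y * G x y' * c y')
      _ = ∑ x : X, ∑ y : Y, G x y * r x * c y := by
          refine Finset.sum_congr rfl fun x _ => ?_
          rw [Finset.sum_comm]
          refine Finset.sum_congr rfl fun y' _ => ?_
          rw [hr_def]
          rw [show (∑ y : Y, G x y * G x y' * c y') = (∑ y : Y, G x y) * (G x y' * c y') by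
            rw [Finset.sum_mul]; exact Finset.sum_congr rfl fun y _ => by ring]
          ring
  have Icc1 : ∑ p : Y × Y, c p.1 ^ 2 = n * CY := by
    rw [hCY_def, Fintype.sum_prod_type]
    simp only [Finset.sum_const, Finset.card_univ, nsmul_eq_mul]
    rw [← Finset.mul_sum, hn_def]
  have Icc2 : ∑ p : Y × Y, c p.2 ^ 2 = n * CY := by
    rw [hCY_def, Fintype.sum_prod_type]
    simp only [Finset.sum_const, Finset.card_univ, nsmul_eq_mul]
    try rw [hn_def]
  have Icross : ∑ p : Y × Y, c p.1 * c p.2 = S1 ^ 2 := by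
    rw [Fintype.sum_prod_type, ← Finset.sum_mul_sum, hcS, sq]
  have Ic1 : ∑ p : Y × Y, c p.1 = n * S1 := by
    rw [Fintype.sum_prod_type]
    simp only [Finset.sum_const, Finset.card_univ, nsmul_eq_mul]
    rw [← Finset.mul_sum, hcS, hn_def]
  have Ic2 : ∑ p : Y × Y, c p.2 = n * S1 := by
    rw [Fintype.sum_prod_type]
    simp only [Finset.sum_const, Finset.card_univ, nsmul_eq_mul]
    rw [hcS, hn_def]
  -- ============ Cauchy–Schwarz basics ============
  have hu3a : S1 ^ 2 ≤ m * CX := by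
    have h := aux_cs_ones (Finset.univ : Finset X) r
    rw [← hS1_def, ← hCX_def] at h
    simpa [hm_def, Finset.card_univ] using h
  have hu3b : S1 ^ 2 ≤ n * CY := by
    have h := aux_cs_ones (Finset.univ : Finset Y) c
    rw [hcS, ← hCY_def] at h
    simpa [hn_def, Finset.card_univ] using h
  have hu4a : CX ^ 2 ≤ n ^ 2 * Q := by
    have h := aux_cs_ones (Finset.univ : Finset (Y × Y)) (fun p => ∑ x, G x p.1 * G x p.2)
    rw [ICX, IQy] at h
    calc CX ^ 2 ≤ ((Finset.univ : Finset (Y × Y)).card : ℝ) * Q := h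
      _ = n ^ 2 * Q := by
          rw [Finset.card_univ, Fintype.card_prod, hn_def]
          push_cast
          ring
  have hu4b : CY ^ 2 ≤ m ^ 2 * Q := by
    have h := aux_cs_ones (Finset.univ : Finset (X × X)) (fun p => ∑ y, G p.1 y * G p.2 y)
    rw [ICY, IQx] at h
    calc CY ^ 2 ≤ ((Finset.univ : Finset (X × X)).card : ℝ) * Q := h
      _ = m ^ 2 * Q := by
          rw [Finset.card_univ, Fintype.card_prod, hm_def]
          push_cast
          ring
  -- ============ Blakley–Roy: S1 ^ 3 ≤ P * (m * n) ============
  have hBR : S1 ^ 3 ≤ P * (m * n) := by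
    have hgle : ∑ p : X × Y, G p.1 p.2 / r p.1 ≤ m := by
      rw [Fintype.sum_prod_type]
      calc ∑ x : X, ∑ y : Y, G x y / r x ≤ ∑ _x : X, (1:ℝ) := by
            refine Finset.sum_le_sum fun x _ => ?_
            rw [← Finset.sum_div]
            have hrx : (∑ y, G x y) = r x := by rw [hr_def]
            rw [hrx]
            rcases (hrnn x).eq_or_lt with h0 | h0
            · rw [← h0]; norm_num
            · rw [div_self h0.ne']
        _ = m := by rw [Finset.sum_const, Finset.card_univ, nsmul_eq_mul, hm_def, mul_one]
    have hhle : ∑ p : X × Y, G p.1 p.2 / c p.2 ≤ n := by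
      rw [Fintype.sum_prod_type, Finset.sum_comm]
      calc ∑ y : Y, ∑ x : X, G x y / c y ≤ ∑ _y : Y, (1:ℝ) := by
            refine Finset.sum_le_sum fun y _ => ?_
            rw [← Finset.sum_div]
            have hcy : (∑ x, G x y) = c y := by rw [hc_def]
            rw [hcy]
            rcases (hcnn y).eq_or_lt with h0 | h0
            · rw [← h0]; norm_num
            · rw [div_self h0.ne']
        _ = n := by rw [Finset.sum_const, Finset.card_univ, nsmul_eq_mul, hn_def, mul_one]
    have hgnn : 0 ≤ ∑ p : X × Y, G p.1 p.2 / r p.1 :=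
      Finset.sum_nonneg fun p _ => div_nonneg (hG0 _ _) (hrnn _)
    have hhnn : 0 ≤ ∑ p : X × Y, G p.1 p.2 / c p.2 :=
      Finset.sum_nonneg fun p _ => div_nonneg (hG0 _ _) (hcnn _)
    have h3 := aux_holder3 (Finset.univ : Finset (X × Y))
      (fun p => G p.1 p.2)
      (fun p => G p.1 p.2 * r p.1 * c p.2)
      (fun p => G p.1 p.2 / r p.1)
      (fun p => G p.1 p.2 / c p.2)
      (fun p _ => hG0 _ _)
      (fun p _ => mul_nonneg (mul_nonneg (hG0 _ _) (hrnn _)) (hcnn _))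
      (fun p _ => div_nonneg (hG0 _ _) (hrnn _))
      (fun p _ => div_nonneg (hG0 _ _) (hcnn _))
      (by
        intro p _
        try dsimp only
        by_cases hp : G p.1 p.2 = 0
        · rw [hp]; ring
        · have hGp : 0 < G p.1 p.2 := (hG0 _ _).lt_of_ne (Ne.symm hp)
          have hrp : 0 < r p.1 := by
            refine lt_of_lt_of_le hGp ?_
            rw [hr_def]
            exact Finset.single_le_sum (fun y' _ => hG0 p.1 y') (Finset.mem_univ p.2)
          have hcp : 0 < c p.2 := by
            refine lt_of_lt_of_le hGp ?_
            rw [hc_def]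
            exact Finset.single_le_sum (fun x' _ => hG0 x' p.2) (Finset.mem_univ p.1)
          field_simp
          try ring)
    have ht : ∑ p : X × Y, G p.1 p.2 = S1 := by
      rw [hS1h, Fintype.sum_prod_type]
    have hf : ∑ p : X × Y, G p.1 p.2 * r p.1 * c p.2 = P := by
      rw [hP_def, Fintype.sum_prod_type]
    rw [ht, hf] at h3
    calc S1 ^ 3 ≤ P * (∑ p : X × Y, G p.1 p.2 / r p.1) * (∑ p : X × Y, G p.1 p.2 / c p.2) := h3
      _ = P * ((∑ p : X × Y, G p.1 p.2 / r p.1) * (∑ p : X × Y, G p.1 p.2 / c p.2)) := by ring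
      _ ≤ P * (m * n) := by
          refine mul_le_mul_of_nonneg_left ?_ hPnn
          exact mul_le_mul hgle hhle hhnn hm.le
  -- ============ centered fourth-moment expansion ============
  have hFid : ∀ p : Y × Y,
      ∑ x, (G x p.1 - D) * (G x p.2 - D)
        = (∑ x, G x p.1 * G x p.2) - D * c p.1 - D * c p.2 + m * D ^ 2 := by
    intro p
    have h := aux_sum_center (Finset.univ : Finset X) (fun x => G x p.1) (fun x => G x p.2) D
    rw [h, Finset.card_univ]
  have hQW : ∑ p : Y × Y, (∑ x, (G x p.1 - D) * (G x p.2 - D)) ^ 2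
      = Q - 4*D*P + 2*m*D^2*CX + 2*n*D^2*CY + 2*D^2*S1^2 - 4*m*n*D^3*S1 + m^2*n^2*D^4 := by
    have e1 : ∑ p : Y × Y, (∑ x, (G x p.1 - D) * (G x p.2 - D)) ^ 2
        = ∑ p : Y × Y, ((∑ x, G x p.1 * G x p.2) - D * c p.1 - D * c p.2 + m * D ^ 2) ^ 2 :=
      Finset.sum_congr rfl fun p _ => by rw [hFid p]
    rw [e1]
    rw [aux_expand_sq_sum (Finset.univ : Finset (Y × Y)) (fun p => ∑ x, G x p.1 * G x p.2)
        (fun p => c p.1) (fun p => c p.2) D (m * D ^ 2)]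
    rw [IQy, IP1, IP2, ICX, Icc1, Icc2, Icross, Ic1, Ic2]
    rw [Finset.card_univ, Fintype.card_prod, hn_def]
    push_cast
    ring
  -- ============ the Cauchy–Schwarz chain for T ============
  set Tnum : ℝ := ∑ x, ∑ y, (G x y - D) * u x * v y with hT_def
  have step1 : Tnum ^ 2 ≤ m * ∑ x, (∑ y, (G x y - D) * v y) ^ 2 := by
    have e : Tnum = ∑ x, u x * (∑ y, (G x y - D) * v y) := by
      rw [hT_def]
      refine Finset.sum_congr rfl fun x _ => ?_
      rw [Finset.mul_sum]
      exact Finset.sum_congr rfl fun y _ => by ring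
    have habs : |Tnum| ≤ ∑ x, |∑ y, (G x y - D) * v y| := by
      rw [e]
      refine le_trans (Finset.abs_sum_le_sum_abs _ _) (Finset.sum_le_sum fun x _ => ?_)
      rw [abs_mul, abs_of_nonneg (hu x).1]
      exact mul_le_of_le_one_left (abs_nonneg _) (hu x).2
    calc Tnum ^ 2 = |Tnum| ^ 2 := (sq_abs _).symm
      _ ≤ (∑ x, |∑ y, (G x y - D) * v y|) ^ 2 := by
          exact pow_le_pow_left₀ (abs_nonneg _) habs 2
      _ ≤ (m : ℝ) * ∑ x, |∑ y, (G x y - D) * v y| ^ 2 := by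
          have h := aux_cs_ones (Finset.univ : Finset X) (fun x => |∑ y, (G x y - D) * v y|)
          rw [hm_def]
          simpa [Finset.card_univ] using h
      _ = m * ∑ x, (∑ y, (G x y - D) * v y) ^ 2 := by
          congr 1
          exact Finset.sum_congr rfl fun x _ => sq_abs _
  have step3 : ∑ x, (∑ y, (G x y - D) * v y) ^ 2
      = ∑ p : Y × Y, (v p.1 * v p.2) * (∑ x, (G x p.1 - D) * (G x p.2 - D)) := by
    rw [Fintype.sum_prod_type]
    calc ∑ x, (∑ y, (G x y - D) * v y) ^ 2
        = ∑ x, ∑ y : Y, ∑ y' : Y, ((G x y - D) * v y) * ((G x y' - D) * v y') := by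
          refine Finset.sum_congr rfl fun x _ => ?_
          rw [sq, Finset.sum_mul_sum]
      _ = ∑ y : Y, ∑ y' : Y, ∑ x, ((G x y - D) * v y) * ((G x y' - D) * v y') :=
          (aux_sum_swap3 (fun x y y' => ((G x y - D) * v y) * ((G x y' - D) * v y'))).symm
      _ = ∑ y : Y, ∑ y' : Y, (v (y, y').1 * v (y, y').2) *
            (∑ x, (G x (y, y').1 - D) * (G x (y, y').2 - D)) := by
          refine Finset.sum_congr rfl fun y _ => Finset.sum_congr rfl fun y' _ => ?_
          rw [Finset.mul_sum]
          exact Finset.sum_congr rfl fun x _ => by ring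
  have step4 : ∑ p : Y × Y, (v p.1 * v p.2) * (∑ x, (G x p.1 - D) * (G x p.2 - D))
      ≤ ∑ p : Y × Y, |∑ x, (G x p.1 - D) * (G x p.2 - D)| := by
    refine Finset.sum_le_sum fun p _ => ?_
    have h1 := (hv p.1).1
    have h2 := (hv p.2).1
    have h3 := (hv p.1).2
    have h4 := (hv p.2).2
    calc (v p.1 * v p.2) * (∑ x, (G x p.1 - D) * (G x p.2 - D))
        ≤ |(v p.1 * v p.2) * (∑ x, (G x p.1 - D) * (G x p.2 - D))| := le_abs_self _
      _ = (v p.1 * v p.2) * |∑ x, (G x p.1 - D) * (G x p.2 - D)| := by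
          rw [abs_mul, abs_mul, abs_of_nonneg h1, abs_of_nonneg h2]
      _ ≤ |∑ x, (G x p.1 - D) * (G x p.2 - D)| :=
          mul_le_of_le_one_left (abs_nonneg _) (mul_le_one₀ h3 h2 h4)
  have step5 : (∑ p : Y × Y, |∑ x, (G x p.1 - D) * (G x p.2 - D)|) ^ 2
      ≤ n ^ 2 * ∑ p : Y × Y, (∑ x, (G x p.1 - D) * (G x p.2 - D)) ^ 2 := by
    have h := aux_cs_ones (Finset.univ : Finset (Y × Y))
      (fun p => |∑ x, (G x p.1 - D) * (G x p.2 - D)|)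
    calc (∑ p : Y × Y, |∑ x, (G x p.1 - D) * (G x p.2 - D)|) ^ 2
        ≤ ((Finset.univ : Finset (Y × Y)).card : ℝ) *
            ∑ p : Y × Y, |∑ x, (G x p.1 - D) * (G x p.2 - D)| ^ 2 := h
      _ = n ^ 2 * ∑ p : Y × Y, (∑ x, (G x p.1 - D) * (G x p.2 - D)) ^ 2 := by
          have hsq : ∑ p : Y × Y, |∑ x, (G x p.1 - D) * (G x p.2 - D)| ^ 2
              = ∑ p : Y × Y, (∑ x, (G x p.1 - D) * (G x p.2 - D)) ^ 2 :=
            Finset.sum_congr rfl fun p _ => sq_abs _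
          rw [hsq, Finset.card_univ, Fintype.card_prod, hn_def]
          push_cast
          ring
  have hT4 : Tnum ^ 4 ≤ m ^ 2 * n ^ 2 *
      ∑ p : Y × Y, (∑ x, (G x p.1 - D) * (G x p.2 - D)) ^ 2 := by
    have hgsqnn : 0 ≤ ∑ x, (∑ y, (G x y - D) * v y) ^ 2 :=
      Finset.sum_nonneg fun x _ => sq_nonneg _
    have h1 : ∑ x, (∑ y, (G x y - D) * v y) ^ 2
        ≤ ∑ p : Y × Y, |∑ x, (G x p.1 - D) * (G x p.2 - D)| := by
      rw [step3]; exact step4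
    have h2 : (∑ x, (∑ y, (G x y - D) * v y) ^ 2) ^ 2
        ≤ n ^ 2 * ∑ p : Y × Y, (∑ x, (G x p.1 - D) * (G x p.2 - D)) ^ 2 :=
      le_trans (pow_le_pow_left₀ hgsqnn h1 2) step5
    calc Tnum ^ 4 = (Tnum ^ 2) ^ 2 := by ring
      _ ≤ (m * ∑ x, (∑ y, (G x y - D) * v y) ^ 2) ^ 2 :=
          pow_le_pow_left₀ (sq_nonneg _) step1 2
      _ = m ^ 2 * (∑ x, (∑ y, (G x y - D) * v y) ^ 2) ^ 2 := by ring
      _ ≤ m ^ 2 * (n ^ 2 * ∑ p : Y × Y, (∑ x, (G x p.1 - D) * (G x p.2 - D)) ^ 2) :=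
          mul_le_mul_of_nonneg_left h2 (by positivity)
      _ = m ^ 2 * n ^ 2 * ∑ p : Y × Y, (∑ x, (G x p.1 - D) * (G x p.2 - D)) ^ 2 := by ring
  -- ============ normalized quantities ============
  set chx : ℝ := CX / (m * n ^ 2) with hchx_def
  set chy : ℝ := CY / (m ^ 2 * n) with hchy_def
  set p3 : ℝ := P / (m ^ 2 * n ^ 2) with hp3_def
  clear_value p3 chy chx Tnum P CY CX c4 D S1 c r Q n m
  have hchxnn : 0 ≤ chx := by rw [hchx_def]; positivity
  have hchynn : 0 ≤ chy := by rw [hchy_def]; positivity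
  have f3 : D ^ 2 ≤ chx := by
    rw [hD_def, hchx_def]
    exact aux_div1 hm hn hu3a
  have f3' : D ^ 2 ≤ chy := by
    rw [hD_def, hchy_def, mul_comm m n, show m ^ 2 * n = n * m ^ 2 from mul_comm _ _]
    exact aux_div1 hn hm hu3b
  have f4 : chx ^ 2 ≤ c4 := by
    rw [hchx_def, hc4_def]
    exact aux_div2 hm hn hu4a
  have f4' : chy ^ 2 ≤ c4 := by
    rw [hchy_def, hc4_def]
    exact aux_div2' hm hn hu4b
  have f5 : D ^ 3 ≤ p3 := by
    rw [hD_def, hp3_def]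
    exact aux_div3 hm hn hBR
  have hc4nn : c4 ≤ (1 + ε) ^ 4 * q ^ 4 := h22
  have hchxB : chx ≤ (1 + ε) ^ 2 * q ^ 2 := by
    refine aux_sqle hchxnn (by positivity) ?_
    calc chx ^ 2 ≤ (1 + ε) ^ 4 * q ^ 4 := le_trans f4 hc4nn
      _ = ((1 + ε) ^ 2 * q ^ 2) ^ 2 := by ring
  have hchyB : chy ≤ (1 + ε) ^ 2 * q ^ 2 := by
    refine aux_sqle hchynn (by positivity) ?_
    calc chy ^ 2 ≤ (1 + ε) ^ 4 * q ^ 4 := le_trans f4' hc4nn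
      _ = ((1 + ε) ^ 2 * q ^ 2) ^ 2 := by ring
  have hDup : D ≤ (1 + ε) * q := by
    refine aux_sqle hDnn (by positivity) ?_
    calc D ^ 2 ≤ (1 + ε) ^ 2 * q ^ 2 := le_trans f3 hchxB
      _ = ((1 + ε) * q) ^ 2 := by ring
  have hDlow : (1 - ε) * q ≤ D := h11
  -- ============ main numeric bound ============
  have fmain : Tnum ^ 4 / (m * n) ^ 4 ≤ 81 * ε * q ^ 4 := by
    have hstep : Tnum ^ 4 / (m * n) ^ 4
        ≤ c4 - 4*D*p3 + 2*D^2*chx + 2*D^2*chy - D^4 := by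
      rw [div_le_iff₀ (pow_pos (mul_pos hm hn) 4)]
      calc Tnum ^ 4 ≤ m ^ 2 * n ^ 2 *
            ∑ p : Y × Y, (∑ x, (G x p.1 - D) * (G x p.2 - D)) ^ 2 := hT4
        _ = m ^ 2 * n ^ 2 *
            (Q - 4*D*P + 2*m*D^2*CX + 2*n*D^2*CY + 2*D^2*S1^2 - 4*m*n*D^3*S1 + m^2*n^2*D^4) := by
            rw [hQW]
        _ = (c4 - 4*D*p3 + 2*D^2*chx + 2*D^2*chy - D^4) * (m * n) ^ 4 := by
            rw [hc4_def, hp3_def, hchx_def, hchy_def, hD_def]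
            field_simp [hm.ne', hn.ne']
            ring
    exact aux_numeric hq hε hε1 hc4nn hDlow hDup hDnn hchxB hchyB f3 f5 hstep
  -- ============ |Tn| ≤ 3 ε^{1/4} q ============
  have hE4 : (ε ^ ((1:ℝ)/4)) ^ (4:ℕ) = ε := by
    rw [← Real.rpow_natCast (ε ^ ((1:ℝ)/4)) 4, ← Real.rpow_mul hε.le]
    norm_num
  have hE4nn : 0 ≤ ε ^ ((1:ℝ)/4) := Real.rpow_nonneg hε.le _
  have hTle : |Tnum / (m * n)| ≤ 3 * ε ^ ((1:ℝ)/4) * q := by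
    have h1 : |Tnum / (m * n)| ^ (4:ℕ) ≤ (3 * ε ^ ((1:ℝ)/4) * q) ^ (4:ℕ) := by
      have e2 : (3 * ε ^ ((1:ℝ)/4) * q) ^ (4:ℕ) = 81 * ε * q ^ 4 := by
        rw [mul_pow, mul_pow, hE4]
        norm_num
      have e3 : |Tnum / (m * n)| ^ (4:ℕ) = Tnum ^ 4 / (m * n) ^ 4 := by
        rw [← abs_pow]
        rw [abs_of_nonneg (by positivity)]
        rw [div_pow]
      rw [e2, e3]
      exact fmain
    exact le_of_pow_le_pow_left₀ (by norm_num) (by positivity) h1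
  -- ============ final assembly ============
  have hsu_nn : 0 ≤ ∑ x, u x := Finset.sum_nonneg fun x _ => (hu x).1
  have hsv_nn : 0 ≤ ∑ y, v y := Finset.sum_nonneg fun y _ => (hv y).1
  have hsu_le : ∑ x, u x ≤ m := by
    calc ∑ x, u x ≤ ∑ _x : X, (1:ℝ) := Finset.sum_le_sum fun x _ => (hu x).2
      _ = m := by rw [Finset.sum_const, Finset.card_univ, nsmul_eq_mul, hm_def, mul_one]
  have hsv_le : ∑ y, v y ≤ n := by
    calc ∑ y, v y ≤ ∑ _y : Y, (1:ℝ) := Finset.sum_le_sum fun y _ => (hv y).2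
      _ = n := by rw [Finset.sum_const, Finset.card_univ, nsmul_eq_mul, hn_def, mul_one]
  have hsplit : ∑ x : X, ∑ y : Y, (G x y - q) * u x * v y
      = Tnum + (D - q) * ((∑ x, u x) * (∑ y, v y)) := by
    rw [hT_def, Finset.sum_mul_sum]
    rw [Finset.mul_sum]
    rw [← Finset.sum_add_distrib]
    refine Finset.sum_congr rfl fun x _ => ?_
    rw [Finset.mul_sum, ← Finset.sum_add_distrib]
    refine Finset.sum_congr rfl fun y _ => ?_
    ring
  have hDq : |D - q| ≤ ε * q := aux_absd hDlow hDup
  have h2 : |(D - q) * ((∑ x, u x) * (∑ y, v y)) / (m * n)| ≤ ε * q := by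
    have huv : |(∑ x, u x) * (∑ y, v y)| ≤ m * n := by
      rw [abs_mul, abs_of_nonneg hsu_nn, abs_of_nonneg hsv_nn]
      exact mul_le_mul hsu_le hsv_le hsv_nn hm.le
    exact aux_div_abs (mul_pos hm hn) hDq huv (by positivity)
  have e1 : ε ^ ((1:ℝ)/4) ≤ ε ^ ((1:ℝ)/36) :=
    Real.rpow_le_rpow_of_exponent_ge hε hε1 (by norm_num)
  have e2 : ε ≤ ε ^ ((1:ℝ)/36) := by
    nth_rewrite 1 [← Real.rpow_one ε]
    exact Real.rpow_le_rpow_of_exponent_ge hε hε1 (by norm_num)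
  calc |(∑ x : X, ∑ y : Y, (G x y - q) * u x * v y) / (m * n)|
      = |Tnum / (m * n) + (D - q) * ((∑ x, u x) * (∑ y, v y)) / (m * n)| := by
        rw [hsplit, add_div]
    _ ≤ 4 * ε ^ ((1:ℝ)/36) * q := aux_final hq hTle h2 e1 e2
end

section
/- Let Γ be a graph on n vertices that is (p, β)-jumbled with β ≤ (1/10) p² n, i.e., for all vertex subsets X, Y, |e(X,Y) − p|X||Y|| ≤ β √(|X||Y|). Then in every 2-coloring of the edges of Γ, the number of monochromatic triangles is at least (p³ − 10 p β/n) n³ / 24. -/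
open Finset

namespace GM19

set_option linter.unusedSectionVars false
set_option maxHeartbeats 1000000

variable {V : Type*} [Fintype V] [DecidableEq V]

def ind (G : SimpleGraph V) [DecidableRel G.Adj] (u v : V) : ℝ :=
  if G.Adj u v then 1 else 0

lemma ind_symm (G : SimpleGraph V) [DecidableRel G.Adj] (u v : V) :
    ind G u v = ind G v u := by simp [ind, SimpleGraph.adj_comm]

lemma ind_nonneg (G : SimpleGraph V) [DecidableRel G.Adj] (u v : V) :
    0 ≤ ind G u v := by unfold ind; positivity

def W3 (f g h : V → V → ℝ) : ℝ :=
  ∑ t : V × V × V, f t.1 t.2.1 * g t.1 t.2.2 * h t.2.1 t.2.2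

lemma W3_nested (f g h : V → V → ℝ) :
    W3 f g h = ∑ v : V, ∑ x : V, ∑ y : V, f v x * g v y * h x y := by
  rw [W3, Fintype.sum_prod_type]
  exact Finset.sum_congr rfl fun v _ => by rw [Fintype.sum_prod_type]

lemma W3_swap12 (f g h : V → V → ℝ) (hh : ∀ x y, h x y = h y x) :
    W3 f g h = W3 g f h := by
  refine Fintype.sum_equiv ⟨fun t => (t.1, t.2.2, t.2.1), fun t => (t.1, t.2.2, t.2.1),
    fun ⟨a,b,c⟩ => rfl, fun ⟨a,b,c⟩ => rfl⟩ _ _ (fun ⟨v,x,y⟩ => ?_)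
  dsimp
  rw [hh]
  ring

lemma W3_swap23 (f g h : V → V → ℝ) (hf : ∀ x y, f x y = f y x) :
    W3 f g h = W3 f h g := by
  refine Fintype.sum_equiv ⟨fun t => (t.2.1, t.1, t.2.2), fun t => (t.2.1, t.1, t.2.2),
    fun ⟨a,b,c⟩ => rfl, fun ⟨a,b,c⟩ => rfl⟩ _ _ (fun ⟨v,x,y⟩ => ?_)
  dsimp
  rw [hf]
  ring

lemma W3_add1 (f₁ f₂ g h : V → V → ℝ) :
    W3 (fun u v => f₁ u v + f₂ u v) g h = W3 f₁ g h + W3 f₂ g h := by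
  simp [W3, add_mul, Finset.sum_add_distrib]

lemma W3_add2 (f g₁ g₂ h : V → V → ℝ) :
    W3 f (fun u v => g₁ u v + g₂ u v) h = W3 f g₁ h + W3 f g₂ h := by
  simp [W3, add_mul, mul_add, Finset.sum_add_distrib]

lemma W3_add3 (f g h₁ h₂ : V → V → ℝ) :
    W3 f g (fun u v => h₁ u v + h₂ u v) = W3 f g h₁ + W3 f g h₂ := by
  simp [W3, mul_add, Finset.sum_add_distrib]

lemma card_pair (G : SimpleGraph V) [DecidableRel G.Adj] (X Y : Finset V) :
    ((((X ×ˢ Y).filter fun e => G.Adj e.1 e.2).card : ℝ))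
      = ∑ x : V, ∑ y : V,
          (if x ∈ X then (1:ℝ) else 0) * (if y ∈ Y then (1:ℝ) else 0) * ind G x y := by
  rw [Finset.card_filter, Finset.sum_product]
  push_cast
  rw [← Finset.sum_subset (Finset.subset_univ X)
    (by intro x _ hx; simp [hx])]
  refine Finset.sum_congr rfl fun x hx => ?_
  rw [← Finset.sum_subset (Finset.subset_univ Y)
    (by intro y _ hy; simp [hy])]
  refine Finset.sum_congr rfl fun y hy => ?_
  simp [hx, hy, ind]

lemma card_pair_nbhd (G1 G2 G3 : SimpleGraph V) [DecidableRel G1.Adj] [DecidableRel G2.Adj]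
    [DecidableRel G3.Adj] (v : V) :
    ((((G1.neighborFinset v ×ˢ G2.neighborFinset v).filter
        fun e => G3.Adj e.1 e.2).card : ℝ))
      = ∑ x : V, ∑ y : V, ind G1 v x * ind G2 v y * ind G3 x y := by
  rw [card_pair]
  refine Finset.sum_congr rfl fun x _ => Finset.sum_congr rfl fun y _ => ?_
  simp [ind, SimpleGraph.mem_neighborFinset]

lemma card_nbhd (G : SimpleGraph V) [DecidableRel G.Adj] (v : V) :
    ((G.neighborFinset v).card : ℝ) = ∑ x : V, ind G v x := by
  rw [SimpleGraph.neighborFinset_eq_filter, Finset.card_filter]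
  push_cast
  exact Finset.sum_congr rfl fun x _ => by simp [ind]

lemma W3_triangle (G : SimpleGraph V) [DecidableRel G.Adj] :
    W3 (ind G) (ind G) (ind G) = 6 * ((G.cliqueFinset 3).card : ℝ) := by
  have h1 : W3 (ind G) (ind G) (ind G)
      = ((univ.filter fun t : V × V × V =>
          G.Adj t.1 t.2.1 ∧ G.Adj t.1 t.2.2 ∧ G.Adj t.2.1 t.2.2).card : ℝ) := by
    rw [Finset.card_filter]
    push_cast
    refine Finset.sum_congr rfl fun t _ => ?_
    by_cases h1 : G.Adj t.1 t.2.1 <;> by_cases h2 : G.Adj t.1 t.2.2 <;>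
      by_cases h3 : G.Adj t.2.1 t.2.2 <;> simp [ind, h1, h2, h3]
  rw [h1]
  norm_cast
  rw [Finset.card_eq_sum_card_fiberwise
    (f := fun t : V × V × V => ({t.1, t.2.1, t.2.2} : Finset V)) (t := G.cliqueFinset 3)
    (fun t ht => by
      simp only [mem_coe, mem_filter, mem_univ, true_and] at ht ⊢
      rw [SimpleGraph.mem_cliqueFinset_iff, SimpleGraph.is3Clique_triple_iff]
      exact ht)]
  rw [Finset.sum_congr rfl (fun s hs => ?_), Finset.sum_const, smul_eq_mul, mul_comm]
  rw [SimpleGraph.mem_cliqueFinset_iff, SimpleGraph.is3Clique_iff] at hs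
  obtain ⟨a, b, c, hab, hac, hbc, rfl⟩ := hs
  have hab' := hab.ne
  have hac' := hac.ne
  have hbc' := hbc.ne
  have : (univ.filter fun t : V × V × V =>
        G.Adj t.1 t.2.1 ∧ G.Adj t.1 t.2.2 ∧ G.Adj t.2.1 t.2.2).filter
        (fun t => ({t.1, t.2.1, t.2.2} : Finset V) = {a, b, c})
      = {(a,b,c), (a,c,b), (b,a,c), (b,c,a), (c,a,b), (c,b,a)} := by
    ext ⟨x, y, z⟩
    simp only [mem_filter, mem_univ, true_and, mem_insert, mem_singleton, Prod.mk.injEq]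
    constructor
    · rintro ⟨⟨hxy, hxz, hyz⟩, hset⟩
      have hx : x = a ∨ x = b ∨ x = c := by
        have : x ∈ ({a,b,c} : Finset V) := by rw [← hset]; simp
        simpa using this
      have hy : y = a ∨ y = b ∨ y = c := by
        have : y ∈ ({a,b,c} : Finset V) := by rw [← hset]; simp
        simpa using this
      have hz : z = a ∨ z = b ∨ z = c := by
        have : z ∈ ({a,b,c} : Finset V) := by rw [← hset]; simp
        simpa using this
      have ha : a ∈ ({x,y,z} : Finset V) := by rw [hset]; simp
      have hb : b ∈ ({x,y,z} : Finset V) := by rw [hset]; simp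
      have hc : c ∈ ({x,y,z} : Finset V) := by rw [hset]; simp
      simp only [mem_insert, mem_singleton] at ha hb hc
      have hxy' := hxy.ne
      have hxz' := hxz.ne
      have hyz' := hyz.ne
      rcases hx with rfl | rfl | rfl <;> rcases hy with rfl | rfl | rfl <;>
        rcases hz with rfl | rfl | rfl <;> simp_all
    · have sab : ({b, a, c} : Finset V) = {a, b, c} := by
        ext w; simp; tauto
      have sbc : ({a, c, b} : Finset V) = {a, b, c} := by
        ext w; simp; tauto
      have sca : ({b, c, a} : Finset V) = {a, b, c} := by
        ext w; simp; tauto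
      have scb : ({c, a, b} : Finset V) = {a, b, c} := by
        ext w; simp; tauto
      have scc : ({c, b, a} : Finset V) = {a, b, c} := by
        ext w; simp; tauto
      rintro (⟨rfl,rfl,rfl⟩|⟨rfl,rfl,rfl⟩|⟨rfl,rfl,rfl⟩|⟨rfl,rfl,rfl⟩|⟨rfl,rfl,rfl⟩|⟨rfl,rfl,rfl⟩) <;>
        refine ⟨⟨?_, ?_, ?_⟩, ?_⟩ <;>
        first
          | exact hab | exact hac | exact hbc
          | exact hab.symm | exact hac.symm | exact hbc.symm
          | exact sab | exact sbc | exact sca | exact scb | exact scc | rfl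
  rw [this]
  rw [Finset.card_insert_of_notMem (by simp [Prod.ext_iff, hab', hac', hbc',
    hab'.symm, hac'.symm, hbc'.symm]),
    Finset.card_insert_of_notMem (by simp [Prod.ext_iff, hab', hac', hbc',
    hab'.symm, hac'.symm, hbc'.symm]),
    Finset.card_insert_of_notMem (by simp [Prod.ext_iff, hab', hac', hbc',
    hab'.symm, hac'.symm, hbc'.symm]),
    Finset.card_insert_of_notMem (by simp [Prod.ext_iff, hab', hac', hbc',
    hab'.symm, hac'.symm, hbc'.symm]),
    Finset.card_insert_of_notMem (by simp [Prod.ext_iff, hab', hac', hbc',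
    hab'.symm, hac'.symm, hbc'.symm]),
    Finset.card_singleton]

end GM19
set_option maxHeartbeats 2000000 in
open Finset GM19 in
theorem stmt_19 {V : Type*} [Fintype V] [DecidableEq V] [Nonempty V]
    (Γ : SimpleGraph V) [DecidableRel Γ.Adj]
    (p β : ℝ) (hp : 0 < p) (hp1 : p ≤ 1) (hβ0 : 0 ≤ β)
    (hjumb : ∀ X Y : Finset V,
      |((((X ×ˢ Y).filter fun e => Γ.Adj e.1 e.2).card : ℝ)) -
          p * (X.card : ℝ) * (Y.card : ℝ)|
        ≤ β * Real.sqrt ((X.card : ℝ) * (Y.card : ℝ)))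
    (hβ : β ≤ p ^ 2 * (Fintype.card V : ℝ) / 10)
    (R B : SimpleGraph V) [DecidableRel R.Adj] [DecidableRel B.Adj]
    (hRB : R ⊔ B = Γ) (hdisj : Disjoint R B) :
    (p ^ 3 - 10 * p * β / (Fintype.card V : ℝ)) * (Fintype.card V : ℝ) ^ 3 / 24
      ≤ ((R.cliqueFinset 3).card : ℝ) + ((B.cliqueFinset 3).card : ℝ) := by
  classical
  set n : ℝ := (Fintype.card V : ℝ) with hndef
  set MR : ℝ := ((R.cliqueFinset 3).card : ℝ) with hMR
  set MB : ℝ := ((B.cliqueFinset 3).card : ℝ) with hMB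
  have hn1 : (1:ℝ) ≤ n := by
    rw [hndef]
    exact_mod_cast Fintype.card_pos
  have hn0 : (0:ℝ) < n := lt_of_lt_of_le one_pos hn1
  -- indicator split
  have hnadj : ∀ u v, ¬ (R.Adj u v ∧ B.Adj u v) := by
    intro u v h
    have h2 : (R ⊓ B) = ⊥ := disjoint_iff.mp hdisj
    have h3 : (R ⊓ B).Adj u v := ⟨h.1, h.2⟩
    rw [h2] at h3
    exact h3
  have hiΓ : ind Γ = fun u v => ind R u v + ind B u v := by
    funext u v
    by_cases h1 : R.Adj u v <;> by_cases h2 : B.Adj u v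
    · exact absurd ⟨h1, h2⟩ (hnadj u v)
    all_goals simp [ind, ← hRB, SimpleGraph.sup_adj, h1, h2]
  have hRs : ∀ x y, ind R x y = ind R y x := ind_symm R
  have hBs : ∀ x y, ind B x y = ind B y x := ind_symm B
  -- Step A: the Goodman-type identity
  have hRRΓ : W3 (ind R) (ind R) (ind Γ)
      = W3 (ind R) (ind R) (ind R) + W3 (ind R) (ind R) (ind B) := by
    rw [hiΓ, W3_add3]
  have hBBΓ : W3 (ind B) (ind B) (ind Γ)
      = W3 (ind B) (ind B) (ind R) + W3 (ind B) (ind B) (ind B) := by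
    rw [hiΓ, W3_add3]
  have hRBΓ : W3 (ind R) (ind B) (ind Γ)
      = W3 (ind R) (ind B) (ind R) + W3 (ind R) (ind B) (ind B) := by
    rw [hiΓ, W3_add3]
  have hΓΓΓ : W3 (ind Γ) (ind Γ) (ind Γ)
      = W3 (ind R) (ind R) (ind R) + W3 (ind R) (ind R) (ind B)
      + W3 (ind R) (ind B) (ind R) + W3 (ind R) (ind B) (ind B)
      + W3 (ind B) (ind R) (ind R) + W3 (ind B) (ind R) (ind B)
      + W3 (ind B) (ind B) (ind R) + W3 (ind B) (ind B) (ind B) := by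
    rw [hiΓ]
    simp only [W3_add1, W3_add2, W3_add3]
    ring
  have e1 : W3 (ind R) (ind B) (ind R) = W3 (ind R) (ind R) (ind B) :=
    W3_swap23 _ _ _ hRs
  have e2 : W3 (ind B) (ind R) (ind R) = W3 (ind R) (ind B) (ind R) :=
    W3_swap12 _ _ _ hRs
  have e3 : W3 (ind B) (ind R) (ind B) = W3 (ind R) (ind B) (ind B) :=
    W3_swap12 _ _ _ hBs
  have e4 : W3 (ind B) (ind B) (ind R) = W3 (ind B) (ind R) (ind B) :=
    W3_swap23 _ _ _ hBs
  have htriR : W3 (ind R) (ind R) (ind R) = 6 * MR := W3_triangle R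
  have htriB : W3 (ind B) (ind B) (ind B) = 6 * MB := W3_triangle B
  have hA : 3 * W3 (ind R) (ind R) (ind Γ) + 3 * W3 (ind B) (ind B) (ind Γ)
      + W3 (ind Γ) (ind Γ) (ind Γ) - 6 * W3 (ind R) (ind B) (ind Γ)
      = 24 * (MR + MB) := by
    rw [hRRΓ, hBBΓ, hRBΓ, hΓΓΓ]
    linarith [e1, e2, e3, e4, htriR, htriB]
  -- Step B: per-vertex jumbledness bound
  have key : ∀ v : V,
      p * (((Γ.neighborFinset v).card : ℝ))^2 - 7*β*((Γ.neighborFinset v).card : ℝ)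
      ≤ 3 * (∑ x : V, ∑ y : V, ind R v x * ind R v y * ind Γ x y)
        + 3 * (∑ x : V, ∑ y : V, ind B v x * ind B v y * ind Γ x y)
        + (∑ x : V, ∑ y : V, ind Γ v x * ind Γ v y * ind Γ x y)
        - 6 * (∑ x : V, ∑ y : V, ind R v x * ind B v y * ind Γ x y) := by
    intro v
    have hd : ((Γ.neighborFinset v).card : ℝ)
        = ((R.neighborFinset v).card : ℝ) + ((B.neighborFinset v).card : ℝ) := by
      rw [card_nbhd, card_nbhd, card_nbhd, ← Finset.sum_add_distrib]
      exact Finset.sum_congr rfl fun x _ => congrFun (congrFun hiΓ v) x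
    set r : ℝ := ((R.neighborFinset v).card : ℝ) with hrdef
    set b : ℝ := ((B.neighborFinset v).card : ℝ) with hbdef
    set d : ℝ := ((Γ.neighborFinset v).card : ℝ) with hddef
    have hr0 : (0:ℝ) ≤ r := by rw [hrdef]; positivity
    have hb0 : (0:ℝ) ≤ b := by rw [hbdef]; positivity
    have hd0 : (0:ℝ) ≤ d := by rw [hddef]; positivity
    have j1 := hjumb (R.neighborFinset v) (R.neighborFinset v)
    rw [card_pair_nbhd R R Γ v] at j1
    have j2 := hjumb (B.neighborFinset v) (B.neighborFinset v)
    rw [card_pair_nbhd B B Γ v] at j2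
    have j3 := hjumb (Γ.neighborFinset v) (Γ.neighborFinset v)
    rw [card_pair_nbhd Γ Γ Γ v] at j3
    have j4 := hjumb (R.neighborFinset v) (B.neighborFinset v)
    rw [card_pair_nbhd R B Γ v] at j4
    rw [← hrdef] at j1 j4
    rw [← hbdef] at j2 j4
    rw [← hddef] at j3
    rw [Real.sqrt_mul_self hr0] at j1
    rw [Real.sqrt_mul_self hb0] at j2
    rw [Real.sqrt_mul_self hd0] at j3
    have hsqrt : Real.sqrt (r * b) ≤ (r + b) / 2 := by
      have h1 : r * b ≤ ((r + b) / 2)^2 := by nlinarith [sq_nonneg (r - b)]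
      calc Real.sqrt (r * b) ≤ Real.sqrt (((r + b) / 2)^2) := Real.sqrt_le_sqrt h1
        _ = (r + b) / 2 := Real.sqrt_sq (by positivity)
    have l1 := (abs_le.mp j1).1
    have l2 := (abs_le.mp j2).1
    have l3 := (abs_le.mp j3).1
    have u4 := (abs_le.mp j4).2
    have hb4 : β * Real.sqrt (r * b) ≤ β * ((r + b) / 2) :=
      mul_le_mul_of_nonneg_left hsqrt hβ0
    rw [hd] at l3 ⊢
    linarith [mul_nonneg hp.le (sq_nonneg (r - b)), l1, l2, l3, u4, hb4]
  -- Step C: sum over vertices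
  have hsum : ∑ v : V, (p * (((Γ.neighborFinset v).card : ℝ))^2
        - 7*β*((Γ.neighborFinset v).card : ℝ))
      ≤ 24 * (MR + MB) := by
    calc ∑ v : V, (p * (((Γ.neighborFinset v).card : ℝ))^2
            - 7*β*((Γ.neighborFinset v).card : ℝ))
        ≤ ∑ v : V, (3 * (∑ x : V, ∑ y : V, ind R v x * ind R v y * ind Γ x y)
            + 3 * (∑ x : V, ∑ y : V, ind B v x * ind B v y * ind Γ x y)
            + (∑ x : V, ∑ y : V, ind Γ v x * ind Γ v y * ind Γ x y)
            - 6 * (∑ x : V, ∑ y : V, ind R v x * ind B v y * ind Γ x y)) :=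
          Finset.sum_le_sum fun v _ => key v
      _ = 24 * (MR + MB) := by
          rw [← hA, W3_nested, W3_nested, W3_nested, W3_nested]
          simp only [Finset.sum_add_distrib, Finset.sum_sub_distrib, ← Finset.mul_sum]
  set S : ℝ := ∑ v : V, ((Γ.neighborFinset v).card : ℝ) with hSdef
  set Q : ℝ := ∑ v : V, (((Γ.neighborFinset v).card : ℝ))^2 with hQdef
  have hQsum : p * Q - 7 * β * S ≤ 24 * (MR + MB) := by
    rw [hSdef, hQdef, Finset.mul_sum, Finset.mul_sum, ← Finset.sum_sub_distrib]
    exact hsum.trans_eq' (Finset.sum_congr rfl fun v _ => by ring)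
  have hCS : S^2 ≤ n * Q := by
    have h := sq_sum_le_card_mul_sum_sq (s := (univ : Finset V))
      (f := fun v => ((Γ.neighborFinset v).card : ℝ))
    simpa [-SimpleGraph.card_neighborFinset_eq_degree, Finset.card_univ, ← hSdef, ← hQdef, ← hndef] using h
  -- bounds on S
  have hcardu : (((univ : Finset V)).card : ℝ) = n := by
    rw [Finset.card_univ]
  have jS := hjumb univ univ
  rw [card_pair Γ univ univ] at jS
  simp only [Finset.mem_univ, if_true, one_mul] at jS
  rw [hcardu, Real.sqrt_mul_self hn0.le] at jS
  have hSeq : S = ∑ v : V, ∑ x : V, ind Γ v x :=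
    Finset.sum_congr rfl fun v _ => card_nbhd Γ v
  rw [← hSeq] at jS
  have hS1 : p * n^2 - β * n ≤ S := by
    have h := (abs_le.mp jS).1
    have hnn : p * n * n = p * n^2 := by ring
    linarith [h, hnn.le, hnn.ge]
  have hS2 : S ≤ p * n^2 + β * n := by
    have h := (abs_le.mp jS).2
    linarith [h, (by ring : p * n * n = p * n^2).le, (by ring : p * n * n = p * n^2).ge]
  -- final arithmetic
  have hQ' : p * S^2 - 7*β*S*n ≤ 24*(MR+MB)*n := by
    have h1 : p * S^2 ≤ p * (n * Q) := mul_le_mul_of_nonneg_left hCS hp.le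
    have h2 : (p * Q - 7 * β * S) * n ≤ (24 * (MR + MB)) * n :=
      mul_le_mul_of_nonneg_right hQsum hn0.le
    linarith [h1, h2]
  have hu : 0 ≤ S - (p*n^2 - β*n) := by linarith
  have hβn : β * n ≤ p^2 * n / 10 * n := mul_le_mul_of_nonneg_right hβ hn0.le
  have hc1 : 0 ≤ 2*p^2*n^2 - 2*p*β*n - 7*β*n := by
    have hpβ : p * β ≤ β := by
      have h := mul_le_mul_of_nonneg_right hp1 hβ0
      linarith
    have hpβn : p * β * n ≤ β * n := mul_le_mul_of_nonneg_right hpβ hn0.le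
    have hp2n2 : (0:ℝ) ≤ p^2 * n^2 := by positivity
    linarith [hβn, hpβn, hp2n2]
  have hc0 : 0 ≤ 3*p*β*n^3 - 2*p^2*β*n^3 + p*β^2*n^2 + 7*β^2*n^2 := by
    have h1 : 0 ≤ p * (3 - 2*p) * β * n^3 := by
      have : (0:ℝ) ≤ 3 - 2*p := by linarith
      positivity
    have h2 : (0:ℝ) ≤ p * β^2 * n^2 := by positivity
    have h3 : (0:ℝ) ≤ β^2 * n^2 := by positivity
    linarith [h1, h2, h3]
  have hfin : (p^3*n^3 - 10*p*β*n^2) * n ≤ (24*(MR+MB)) * n := by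
    linarith [mul_nonneg hu hc1, mul_nonneg hp.le (sq_nonneg (S - (p*n^2 - β*n))), hQ', hc0]
  have hfin2 : p^3*n^3 - 10*p*β*n^2 ≤ 24*(MR+MB) := (mul_le_mul_iff_of_pos_right hn0).mp hfin
  have expand : (p ^ 3 - 10 * p * β / n) * n ^ 3 / 24 = (p^3*n^3 - 10*p*β*n^2)/24 := by
    field_simp
  rw [expand, div_le_iff₀ (by norm_num : (0:ℝ) < 24)]
  linarith
end
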